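/- Let Λ = ℤ((t)) be the Novikov ring of formal Laurent series over ℤ, viewed as a module over the Laurent polynomial ring ℤ[t, t^{-1}]. Then Λ is a flat ℤ[t, t^{-1}]-module. -/

import Mathlib

/-- The monoid homomorphism `Multiplicative ℤ →* ℤ((t))` sending `n` to `t^n`. -/
noncomputable def tPow : Multiplicative ℤ →* LaurentSeries ℤ where
  toFun n := HahnSeries.single (Multiplicative.toAdd n) (1 : ℤ)
  map_one' := by simp
  map_mul' a b := by rw [HahnSeries.single_mul_single, one_mul]; rfl

/-- The natural inclusion of the ring `ℤ[t, t⁻¹]` of Laurent polynomials into the ring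
`ℤ((t))` of formal Laurent series, sending `t^n` to `t^n`. -/
noncomputable def laurentPolyToLaurentSeries : LaurentPolynomial ℤ →+* LaurentSeries ℤ :=
  AddMonoidAlgebra.liftNCRingHom (Int.castRingHom (LaurentSeries ℤ)) tPow
    (fun _ _ => Commute.all _ _)

/-- The `ℤ[t,t⁻¹]`-module structure on `ℤ((t))` induced by the inclusion. -/
noncomputable instance : Module (LaurentPolynomial ℤ) (LaurentSeries ℤ) :=
  laurentPolyToLaurentSeries.toModule

namespace NovikovFlatAux

open Polynomial PowerSeries

/-- The ideal `(X)` in `ℤ[X]`. -/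
noncomputable def II : Ideal (Polynomial ℤ) := Ideal.span {Polynomial.X}

lemma transitionMap_mk' {m n : ℕ} (hmn : m ≤ n) (x : Polynomial ℤ) :
    AdicCompletion.transitionMap II (Polynomial ℤ) hmn (Submodule.Quotient.mk x) =
      Submodule.Quotient.mk x := rfl

lemma smul_top_eq (n : ℕ) :
    (II ^ n • ⊤ : Submodule (Polynomial ℤ) (Polynomial ℤ)) = Ideal.span {Polynomial.X ^ n} := by
  rw [smul_eq_mul, Ideal.mul_top, II, Ideal.span_singleton_pow]

lemma mem_smul_top_iff (n : ℕ) (p : Polynomial ℤ) :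
    p ∈ (II ^ n • ⊤ : Submodule (Polynomial ℤ) (Polynomial ℤ)) ↔ ∀ k < n, p.coeff k = 0 := by
  rw [smul_top_eq, Ideal.mem_span_singleton]
  exact Polynomial.X_pow_dvd_iff

lemma coeff_coe_mul (p : Polynomial ℤ) (f : PowerSeries ℤ) {k n : ℕ} (hk : k < n) :
    PowerSeries.coeff k ((p : PowerSeries ℤ) * f) = (p * trunc n f).coeff k := by
  rw [PowerSeries.coeff_mul, Polynomial.coeff_mul]
  refine Finset.sum_congr rfl fun x hx => ?_
  rw [Finset.HasAntidiagonal.mem_antidiagonal] at hx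
  have hx2 : x.2 < n := lt_of_le_of_lt (hx ▸ Nat.le_add_left _ _) hk
  rw [Polynomial.coeff_coe, coeff_trunc, if_pos hx2]

/-- Truncation as a `ℤ[X]`-linear map into the adic completion. -/
noncomputable def toAdic : PowerSeries ℤ →ₗ[Polynomial ℤ] AdicCompletion II (Polynomial ℤ) where
  toFun f := ⟨fun n => Submodule.Quotient.mk (trunc n f), by
    intro m n hmn
    rw [transitionMap_mk', Submodule.Quotient.eq]
    rw [mem_smul_top_iff]
    intro k hk
    simp [coeff_trunc, hk, hk.trans_le hmn]⟩
  map_add' f g := by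
    apply AdicCompletion.ext
    intro n
    show Submodule.Quotient.mk (trunc n (f + g)) = _
    show _ = (Submodule.Quotient.mk (trunc n f) : (Polynomial ℤ ⧸ (II ^ n • ⊤ : Submodule (Polynomial ℤ) (Polynomial ℤ)))) + Submodule.Quotient.mk (trunc n g)
    rw [map_add, Submodule.Quotient.mk_add]
  map_smul' p f := by
    apply AdicCompletion.ext
    intro n
    rw [RingHom.id_apply]
    show Submodule.Quotient.mk (trunc n (p • f)) = p • (Submodule.Quotient.mk (trunc n f) : (Polynomial ℤ ⧸ (II ^ n • ⊤ : Submodule (Polynomial ℤ) (Polynomial ℤ))))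
    rw [← Submodule.Quotient.mk_smul, Submodule.Quotient.eq, mem_smul_top_iff]
    intro k hk
    have hsmul : (p • f : PowerSeries ℤ) = (p : PowerSeries ℤ) * f := by
      rw [Algebra.smul_def, algebraMap_apply']
      simp
    rw [Polynomial.coeff_sub, coeff_trunc, if_pos hk, hsmul, coeff_coe_mul p f hk,
      smul_eq_mul, sub_self]

lemma toAdic_injective : Function.Injective toAdic := by
  rw [injective_iff_map_eq_zero]
  intro f hf
  ext k
  have h : (toAdic f).val (k + 1) = 0 := by rw [hf]; rfl
  rw [show (toAdic f).val (k+1) = Submodule.Quotient.mk (trunc (k+1) f) from rfl,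
    Submodule.Quotient.mk_eq_zero, mem_smul_top_iff] at h
  have := h k (Nat.lt_succ_self k)
  rw [coeff_trunc, if_pos (Nat.lt_succ_self k)] at this
  simpa using this

lemma toAdic_surjective : Function.Surjective toAdic := by
  intro x
  have hsur : ∀ n, ∃ q : Polynomial ℤ, Submodule.Quotient.mk q = x.val n := fun n =>
    Submodule.Quotient.mk_surjective _ (x.val n)
  choose p hp using hsur
  refine ⟨PowerSeries.mk fun k => (p (k + 1)).coeff k, ?_⟩
  apply AdicCompletion.ext
  intro n
  show Submodule.Quotient.mk (trunc n _) = x.val n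
  rw [← hp n, Submodule.Quotient.eq, mem_smul_top_iff]
  intro k hk
  have hcomp : AdicCompletion.transitionMap II (Polynomial ℤ) (Nat.succ_le_of_lt hk) (x.val n)
      = x.val (k + 1) := x.2 _
  rw [← hp n, ← hp (k + 1), transitionMap_mk', Submodule.Quotient.eq,
    mem_smul_top_iff] at hcomp
  have hco := hcomp k (Nat.lt_succ_self k)
  rw [Polynomial.coeff_sub, sub_eq_zero] at hco
  rw [Polynomial.coeff_sub, coeff_trunc, if_pos hk, PowerSeries.coeff_mk, hco, sub_self]

/-- `ℤ[[X]]` is flat over `ℤ[X]`. -/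
lemma flat_powerSeries : Module.Flat (Polynomial ℤ) (PowerSeries ℤ) := by
  have : Module.Flat (Polynomial ℤ) (AdicCompletion II (Polynomial ℤ)) :=
    inferInstance
  exact Module.Flat.of_linearEquiv
    (LinearEquiv.ofBijective toAdic ⟨toAdic_injective, toAdic_surjective⟩)

lemma lp_single (n : ℤ) (a : ℤ) :
    laurentPolyToLaurentSeries (AddMonoidAlgebra.single n a) = HahnSeries.single n a := by
  rw [laurentPolyToLaurentSeries, AddMonoidAlgebra.liftNCRingHom]
  have h : (AddMonoidAlgebra.liftNC ((Int.castRingHom (LaurentSeries ℤ)) : ℤ →+ LaurentSeries ℤ)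
      (⇑tPow) (AddMonoidAlgebra.single n a)) = ((a : ℤ) : LaurentSeries ℤ) * tPow (Multiplicative.ofAdd n) :=
    AddMonoidAlgebra.liftNC_single _ _ _ _
  refine h.trans ?_
  have h2 : ((a : ℤ) : LaurentSeries ℤ) = HahnSeries.single (0 : ℤ) a :=
    (eq_intCast (HahnSeries.C : ℤ →+* LaurentSeries ℤ) a).symm
  have h3 : tPow (Multiplicative.ofAdd n) = HahnSeries.single n (1 : ℤ) := rfl
  rw [h2, h3, HahnSeries.single_mul_single, zero_add, mul_one]

lemma lp_C (a : ℤ) :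
    laurentPolyToLaurentSeries (LaurentPolynomial.C a) = HahnSeries.C a := by
  rw [← LaurentPolynomial.single_eq_C, lp_single]; rfl

lemma lp_T (n : ℤ) :
    laurentPolyToLaurentSeries (LaurentPolynomial.T n) = HahnSeries.single n 1 := by
  rw [LaurentPolynomial.T, lp_single]

lemma key : laurentPolyToLaurentSeries.comp (Polynomial.toLaurent (R := ℤ))
    = (HahnSeries.ofPowerSeries ℤ ℤ).comp Polynomial.coeToPowerSeries.ringHom := by
  apply Polynomial.ringHom_ext
  · intro a
    simp only [RingHom.coe_comp, Function.comp_apply, Polynomial.toLaurent_C,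
      Polynomial.coeToPowerSeries.ringHom_apply, Polynomial.coe_C,
      HahnSeries.ofPowerSeries_C, lp_C]
  · simp only [RingHom.coe_comp, Function.comp_apply, Polynomial.toLaurent_X,
      Polynomial.coeToPowerSeries.ringHom_apply, Polynomial.coe_X,
      HahnSeries.ofPowerSeries_X, lp_T]

lemma key' (r : Polynomial ℤ) :
    laurentPolyToLaurentSeries (Polynomial.toLaurent r)
      = HahnSeries.ofPowerSeries ℤ ℤ (r : PowerSeries ℤ) := by
  have := DFunLike.congr_fun key r
  simpa using this

lemma am_poly_ps (r : Polynomial ℤ) :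
    algebraMap (Polynomial ℤ) (PowerSeries ℤ) r = (r : PowerSeries ℤ) := by
  rw [PowerSeries.algebraMap_apply', Algebra.algebraMap_self, PowerSeries.map_id]; rfl

end NovikovFlatAux

/-- The Novikov ring `Λ = ℤ((t))` of formal Laurent series is flat as a module over
the Laurent polynomial ring `ℤ[t, t⁻¹]`. -/
theorem laurentSeries_flat_over_laurentPolynomial :
    Module.Flat (LaurentPolynomial ℤ) (LaurentSeries ℤ) := by
  haveI t1 : IsScalarTower (Polynomial ℤ) (PowerSeries ℤ) (LaurentSeries ℤ) := ⟨fun r s x => by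
    simp only [Algebra.smul_def, map_mul, HahnSeries.algebraMap_apply',
      LaurentSeries.coe_algebraMap, mul_assoc, Algebra.algebraMap_self, RingHom.id_apply]⟩
  haveI : Module.Flat (PowerSeries ℤ) (LaurentSeries ℤ) :=
    IsLocalization.flat _ (Submonoid.powers (PowerSeries.X : PowerSeries ℤ))
  haveI : Module.Flat (Polynomial ℤ) (PowerSeries ℤ) := NovikovFlatAux.flat_powerSeries
  haveI : Module.Flat (Polynomial ℤ) (LaurentSeries ℤ) :=
    Module.Flat.trans (Polynomial ℤ) (PowerSeries ℤ) (LaurentSeries ℤ)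
  haveI : IsLocalization (Submonoid.powers (Polynomial.X : Polynomial ℤ)) (LaurentPolynomial ℤ) :=
    LaurentPolynomial.isLocalization
  haveI t2 : IsScalarTower (Polynomial ℤ) (LaurentPolynomial ℤ) (LaurentSeries ℤ) := by
    refine ⟨fun r q x => ?_⟩
    show laurentPolyToLaurentSeries (r • q) * x = r • (laurentPolyToLaurentSeries q * x)
    rw [Algebra.smul_def r q, map_mul, LaurentPolynomial.algebraMap_eq_toLaurent,
      NovikovFlatAux.key', Algebra.smul_def, HahnSeries.algebraMap_apply',
      NovikovFlatAux.am_poly_ps, mul_assoc]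
  haveI := isLocalizedModule_id (Submonoid.powers (Polynomial.X : Polynomial ℤ))
    (LaurentSeries ℤ) (LaurentPolynomial ℤ)
  exact Module.Flat.of_isLocalizedModule (Rp := LaurentPolynomial ℤ)
    (Submonoid.powers (Polynomial.X : Polynomial ℤ))
    (LinearMap.id : LaurentSeries ℤ →ₗ[Polynomial ℤ] LaurentSeries ℤ)
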